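/- Let ι be a finite index set, n : ι → ℝ a nonnegative vector (true frequencies), n̂ : ι → ℝ (estimated frequencies), and γ, ε' ∈ (0,1]. Assume |n̂ j − n j| < (1/2) · ε' · γ · L2(n) for every j ∈ ι. Let S be a finite subset of ι such that (card S : ℝ) > 1/γ² and such that n̂ a ≥ n̂ b for every a ∈ S and b ∉ S (S consists of top elements by estimated frequency). Then every index i with n i > (1+ε') · γ · L2(n) belongs to S. (Any sufficiently large top-k list by estimated frequencies contains all elements with true frequency at least (1+ε')γL2.) -/

import Mathlib

theorem top_list_contains_heavy {ι : Type*} [Fintype ι]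
    (n nh : ι → ℝ) (hn : ∀ j, 0 ≤ n j)
    (γ ε' : ℝ) (hγ0 : 0 < γ) (hγ1 : γ ≤ 1) (hε0 : 0 < ε') (hε1 : ε' ≤ 1)
    (hest : ∀ j, |nh j - n j| < (1 / 2) * ε' * γ * Real.sqrt (∑ j, (n j) ^ 2))
    (S : Finset ι) (hScard : (S.card : ℝ) > 1 / γ ^ 2)
    (hStop : ∀ a ∈ S, ∀ b ∉ S, nh b ≤ nh a)
    (i : ι) (hi : n i > (1 + ε') * γ * Real.sqrt (∑ j, (n j) ^ 2)) :
    i ∈ S := by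
  by_contra hiS
  set L := Real.sqrt (∑ j, (n j) ^ 2) with hLdef
  have hsum_nonneg : 0 ≤ ∑ j, (n j) ^ 2 := Finset.sum_nonneg fun j _ => sq_nonneg _
  have hL2 : L ^ 2 = ∑ j, (n j) ^ 2 := Real.sq_sqrt hsum_nonneg
  have hLnn : 0 ≤ L := Real.sqrt_nonneg _
  have hLpos : 0 < L := by
    rcases hLnn.lt_or_eq with h | h
    · exact h
    · exfalso
      have hni : 0 < n i := by rw [← h, mul_zero] at hi; exact hi
      have : (n i) ^ 2 ≤ ∑ j, (n j) ^ 2 :=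
        Finset.single_le_sum (f := fun j => (n j) ^ 2) (fun j _ => sq_nonneg _)
          (Finset.mem_univ i)
      nlinarith
  have key : ∀ a ∈ S, γ * L < n a := by
    intro a ha
    have h1 := hStop a ha i hiS
    have h2 := abs_lt.mp (hest i)
    have h3 := abs_lt.mp (hest a)
    nlinarith
  have hsumS : (S.card : ℝ) * (γ * L) ^ 2 ≤ ∑ a ∈ S, (n a) ^ 2 := by
    calc (S.card : ℝ) * (γ * L) ^ 2 = ∑ _a ∈ S, (γ * L) ^ 2 := by
          rw [Finset.sum_const, nsmul_eq_mul]
      _ ≤ ∑ a ∈ S, (n a) ^ 2 := by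
          apply Finset.sum_le_sum
          intro a ha
          have := key a ha
          nlinarith [mul_pos hγ0 hLpos]
  have hsub : ∑ a ∈ S, (n a) ^ 2 ≤ ∑ j, (n j) ^ 2 :=
    Finset.sum_le_sum_of_subset_of_nonneg (Finset.subset_univ S)
      (fun j _ _ => sq_nonneg _)
  have hγ2 : 0 < γ ^ 2 := by positivity
  have hbig : (1 / γ ^ 2) * (γ * L) ^ 2 < (S.card : ℝ) * (γ * L) ^ 2 := by
    apply mul_lt_mul_of_pos_right hScard
    positivity
  have : (1 / γ ^ 2) * (γ * L) ^ 2 = L ^ 2 := by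
    field_simp
  nlinarith
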